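/- Let R be a connected quantized Weyl algebra over K generated by x_1,...,x_n with parameters q_{ij} and r_{ij}. Then there exists q ∈ K^* such that {q_{ij} : 1 ≤ i ≠ j ≤ n} = {q, q^{-1}}. -/

import Mathlib

noncomputable section

open FreeAlgebra

/-- The defining relations `x_i x_j = q_{ij} x_j x_i + r_{ij}` (`i ≠ j`) of a
connected quantized Weyl algebra (generators indexed `0,…,n-1`). -/
inductive CQWRel (K : Type) [Field K] (n : ℕ) (q r : Fin n → Fin n → K) :
    FreeAlgebra K (Fin n) → FreeAlgebra K (Fin n) → Prop
  | mk (i j : Fin n) (hij : i ≠ j) :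
      CQWRel K n q r (ι K i * ι K j)
        (q i j • (ι K j * ι K i) + algebraMap K (FreeAlgebra K (Fin n)) (r i j))

/-- The standard monomial `x_1^{a_1} ⋯ x_n^{a_n}` (product taken in increasing index order). -/
def stdMonomial {R : Type} [Ring R] (n : ℕ) (x : Fin n → R) (a : Fin n → ℕ) : R :=
  ((List.finRange n).map (fun i => x i ^ a i)).prod

/-- The family of standard monomials (indexed by exponent vectors) is a `K`-basis of `R`. -/
def IsMonBasis (K : Type) [Field K] {R : Type} [Ring R] [Algebra K R] (n : ℕ)
    (x : Fin n → R) : Prop :=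
  LinearIndependent K (fun a : Fin n → ℕ => stdMonomial n x a) ∧
    Submodule.span K (Set.range (fun a : Fin n → ℕ => stdMonomial n x a)) = ⊤

/-- The graph on the generators, with an edge between `i` and `j` iff `r_{ij} ≠ 0`,
is connected. -/
def GraphConnected {K : Type} [Field K] (n : ℕ) (r : Fin n → Fin n → K) : Prop :=
  ∀ i j : Fin n, Relation.ReflTransGen (fun a b : Fin n => a ≠ b ∧ r a b ≠ 0) i j

/-! ### Auxiliary lemmas -/

lemma CQW_stdMonomial_single {R : Type} [Ring R] (n : ℕ) (x : Fin n → R) (i : Fin n) :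
    stdMonomial n x (Pi.single i 1) = x i := by
  have h := List.prod_map_eq_pow_single (l := List.finRange n) i
    (fun l => x l ^ Pi.single i 1 l)
    (by intro a' ha' _; simp [Pi.single_apply, ha'])
  unfold stdMonomial
  rw [h]
  simp [List.count_eq_one_of_mem (List.nodup_finRange n) (List.mem_finRange i)]

lemma CQW_single_injective {n : ℕ} {i j : Fin n}
    (h : Pi.single (M := fun _ => ℕ) i 1 = Pi.single j 1) : i = j := by
  by_contra hne
  have := congrFun h i
  simp [Pi.single_apply, hne] at this

/-- Coefficient extraction for a linear relation among three distinct generators. -/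
lemma CQW_coeff_three (K : Type) [Field K] {R : Type} [Ring R] [Algebra K R] (n : ℕ)
    (x : Fin n → R)
    (li : LinearIndependent K (fun a : Fin n → ℕ => stdMonomial n x a))
    (i j k : Fin n) (hij : i ≠ j) (hjk : j ≠ k) (hik : i ≠ k)
    (a b c : K) (h : a • x i + b • x j + c • x k = 0) :
    a = 0 ∧ b = 0 ∧ c = 0 := by
  classical
  set v : Fin 3 → (Fin n → ℕ) := ![Pi.single i 1, Pi.single j 1, Pi.single k 1] with hv
  have hinj : Function.Injective v := by
    intro s t hst
    fin_cases s <;> fin_cases t <;> simp_all [hv] <;>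
      first
        | rfl
        | (exact absurd (CQW_single_injective (by assumption)) (by tauto))
  have li3 : LinearIndependent K ((fun a : Fin n → ℕ => stdMonomial n x a) ∘ v) :=
    li.comp v hinj
  have := Fintype.linearIndependent_iff.mp li3 ![a, b, c] ?_
  · exact ⟨this 0, this 1, this 2⟩
  · simpa [Fin.sum_univ_three, hv, Function.comp, CQW_stdMonomial_single] using h

/-- The generic associativity computation in any `K`-algebra. -/
lemma CQW_expandE (K : Type) [Field K] (R : Type) [Ring R] [Algebra K R]
    (A B C : R) (qij qkj qki rij rkj rki : K)
    (h1 : A * B = qij • (B * A) + algebraMap K R rij)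
    (h2 : C * B = qkj • (B * C) + algebraMap K R rkj)
    (h3 : C * A = qki • (A * C) + algebraMap K R rki) :
    (qij * qkj * rki) • B + (qij * rkj) • A + rij • C
      = (qki * qkj * rij) • C + (qki * rkj) • A + rki • B := by
  have hc : ∀ (a : K) (x : R), x * algebraMap K R a = a • x := fun a x => by
    rw [Algebra.algebraMap_eq_smul_one, mul_smul_comm, mul_one]
  have hc' : ∀ (a : K) (x : R), algebraMap K R a * x = a • x := fun a x =>
    (Algebra.smul_def a x).symm
  have h2' : ∀ x : R, x * C * B = qkj • (x * B * C) + rkj • x := fun x => by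
    rw [mul_assoc, h2, mul_add, mul_smul_comm, hc, ← mul_assoc]
  have h3' : ∀ x : R, x * C * A = qki • (x * A * C) + rki • x := fun x => by
    rw [mul_assoc, h3, mul_add, mul_smul_comm, hc, ← mul_assoc]
  have e1 : C * (A * B) = (qij * qkj * qki) • (B * A * C)
      + ((qij * qkj * rki) • B + (qij * rkj) • A + rij • C) := by
    simp only [h1, h2, h3, h3', mul_add, add_mul, smul_mul_assoc, mul_smul_comm,
      smul_smul, smul_add, hc, hc', ← mul_assoc]
    module
  have e2 : (C * A) * B = (qij * qkj * qki) • (B * A * C)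
      + ((qki * qkj * rij) • C + (qki * rkj) • A + rki • B) := by
    simp only [h1, h2, h2', h3, mul_add, add_mul, smul_mul_assoc, mul_smul_comm,
      smul_smul, smul_add, hc, hc', ← mul_assoc]
    module
  have e3 : C * (A * B) = (C * A) * B := (mul_assoc _ _ _).symm
  rw [e1, e2] at e3
  exact add_left_cancel e3

/-- The defining relations hold in the quotient algebra. -/
lemma CQW_rel (K : Type) [Field K] (n : ℕ) (q r : Fin n → Fin n → K)
    (i j : Fin n) (hij : i ≠ j) :
    RingQuot.mkAlgHom K (CQWRel K n q r) (ι K i)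
        * RingQuot.mkAlgHom K (CQWRel K n q r) (ι K j)
      = q i j • (RingQuot.mkAlgHom K (CQWRel K n q r) (ι K j)
          * RingQuot.mkAlgHom K (CQWRel K n q r) (ι K i))
        + algebraMap K (RingQuot (CQWRel K n q r)) (r i j) := by
  have h := RingQuot.mkAlgHom_rel K (s := CQWRel K n q r) (CQWRel.mk i j hij)
  simpa [map_mul, map_add, map_smul, AlgHom.commutes] using h

/-- Key consequence: for pairwise distinct `i,j,k`, `r i j = q k i * q k j * r i j`. -/
lemma CQW_keyF (K : Type) [Field K] (n : ℕ) (q r : Fin n → Fin n → K)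
    (li : LinearIndependent K (fun a : Fin n → ℕ =>
      stdMonomial n (fun i => RingQuot.mkAlgHom K (CQWRel K n q r) (ι K i)) a))
    (i j k : Fin n) (hij : i ≠ j) (hkj : k ≠ j) (hki : k ≠ i) :
    r i j = q k i * q k j * r i j := by
  set x : Fin n → RingQuot (CQWRel K n q r) :=
    fun i => RingQuot.mkAlgHom K (CQWRel K n q r) (ι K i) with hx
  have h1 := CQW_rel K n q r i j hij
  have h2 := CQW_rel K n q r k j hkj
  have h3 := CQW_rel K n q r k i hki
  have E := CQW_expandE K (RingQuot (CQWRel K n q r)) (x i) (x j) (x k)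
    (q i j) (q k j) (q k i) (r i j) (r k j) (r k i) h1 h2 h3
  have h0 : (q i j * r k j - q k i * r k j) • x i
      + (q i j * q k j * r k i - r k i) • x j
      + (r i j - q k i * q k j * r i j) • x k
      = ((q i j * q k j * r k i) • x j + (q i j * r k j) • x i + (r i j) • x k)
        - ((q k i * q k j * r i j) • x k + (q k i * r k j) • x i + (r k i) • x j) := by
    module
  rw [E, sub_self] at h0
  have hco := CQW_coeff_three K n x li i j k hij
    (fun h => hkj h.symm) (fun h => hki h.symm) _ _ _ h0
  linear_combination hco.2.2

/-- Corollary 2.10: for a connected quantized Weyl algebra `R` generated by `x_1,…,x_n`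
with parameters `q_{ij}` and `r_{ij}`, there exists `q ∈ K^*` such that
`{q_{ij} : 1 ≤ i ≠ j ≤ n} = {q, q⁻¹}`. -/
theorem stmt1 (K : Type) [Field K] [IsAlgClosed K] (n : ℕ) (hn : 2 ≤ n)
    (q r : Fin n → Fin n → K)
    (hq0 : ∀ i j : Fin n, i ≠ j → q i j ≠ 0)
    (hqinv : ∀ i j : Fin n, i ≠ j → q j i = (q i j)⁻¹)
    (hrinv : ∀ i j : Fin n, i ≠ j → r j i = -(q i j)⁻¹ * r i j)
    (hbasis : IsMonBasis K n
      (fun i => RingQuot.mkAlgHom K (CQWRel K n q r) (ι K i)))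
    (hconn : GraphConnected n r) :
    ∃ q0 : K, q0 ≠ 0 ∧
      {c : K | ∃ i j : Fin n, i ≠ j ∧ q i j = c} = {q0, q0⁻¹} := by
  classical
  have li := hbasis.1
  -- The fundamental constraint.
  have F : ∀ i j k : Fin n, i ≠ j → k ≠ j → k ≠ i → r i j ≠ 0 →
      q k i * q k j = 1 := by
    intro i j k hij hkj hki hr
    have h := CQW_keyF K n q r li i j k hij hkj hki
    have h' : q k i * q k j * r i j = 1 * r i j := by linear_combination -h
    exact mul_right_cancel₀ hr h'
  -- symmetry of edges
  have rsymm : ∀ a b : Fin n, a ≠ b → r a b ≠ 0 → r b a ≠ 0 := by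
    intro a b hab hr
    rw [hrinv a b hab]
    exact mul_ne_zero (neg_ne_zero.mpr (inv_ne_zero (hq0 a b hab))) hr
  -- adjacency: two edges sharing a vertex give equal q along the path
  have adj : ∀ a b c : Fin n, a ≠ b → b ≠ c → a ≠ c → r a b ≠ 0 → r b c ≠ 0 →
      q a b = q b c := by
    intro a b c hab hbc hac hr1 hr2
    have h1 : q a b * q a c = 1 := F b c a hbc hac hab hr2
    have h2 : q c a * q c b = 1 :=
      F a b c hab (fun h => hbc h.symm) (fun h => hac h.symm) hr1
    have hca : q c a = (q a c)⁻¹ := hqinv a c hac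
    have hcb : q c b = (q b c)⁻¹ := hqinv b c hbc
    have hac0 : q a c ≠ 0 := hq0 a c hac
    rw [hca, hcb, ← mul_inv, inv_eq_one] at h2
    -- h2 : q a c * q b c = 1
    apply mul_right_cancel₀ hac0
    rw [h1]
    linear_combination -h2
  -- find an edge
  have : NeZero n := ⟨by omega⟩
  have h01 : (0 : Fin n) ≠ 1 := by
    intro h
    have := congrArg Fin.val h
    simp [Fin.val_one'] at this
    omega
  obtain ⟨a, b, hab, hrab⟩ : ∃ a b : Fin n, a ≠ b ∧ r a b ≠ 0 := by
    rcases (Relation.ReflTransGen.cases_head (hconn 0 1)) with h | ⟨c, hc, -⟩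
    · exact absurd h h01
    · exact ⟨0, c, hc⟩
  set Q := q a b with hQ
  have hQ0 : Q ≠ 0 := hq0 a b hab
  -- Claim 1: every edge value is Q or Q⁻¹
  have claim1 : ∀ w x : Fin n, w ≠ x → r w x ≠ 0 → q w x = Q ∨ q w x = Q⁻¹ := by
    have main : ∀ w : Fin n,
        Relation.ReflTransGen (fun a b : Fin n => a ≠ b ∧ r a b ≠ 0) a w →
        ∀ x : Fin n, w ≠ x → r w x ≠ 0 → q w x = Q ∨ q w x = Q⁻¹ := by
      intro w hw
      induction hw with
      | refl =>
        intro x hax hrx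
        by_cases hxb : x = b
        · subst hxb; exact Or.inl rfl
        · right
          have hba : b ≠ a := fun h => hab h.symm
          have : q b a = q a x := adj b a x hba hax
            (fun h => hxb h.symm) (rsymm a b hab hrab) hrx
          rw [← this, hqinv a b hab]
      | tail _ hstep ih =>
        rename_i w w' _
        obtain ⟨hww', hrww'⟩ := hstep
        intro x hw'x hrx
        by_cases hxw : x = w
        · subst hxw
          have h1 : q x w' = Q ∨ q x w' = Q⁻¹ := ih w' hww' hrww'
          rw [hqinv x w' hww']
          rcases h1 with h | h
          · right; rw [h]
          · left; rw [h, inv_inv]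
        · have h1 : q w w' = Q ∨ q w w' = Q⁻¹ := ih w' hww' hrww'
          have : q w w' = q w' x := adj w w' x hww' hw'x
            (fun h => hxw h.symm) hrww' hrx
          rw [← this]; exact h1
    intro w x hwx hrx
    exact main w (hconn a w) x hwx hrx
  -- Claim 2: every q value is Q or Q⁻¹
  have claim2 : ∀ c d : Fin n, c ≠ d → q c d = Q ∨ q c d = Q⁻¹ := by
    intro c d hcd
    have main : ∀ w : Fin n,
        Relation.ReflTransGen (fun a b : Fin n => a ≠ b ∧ r a b ≠ 0) c w →
        w ≠ c → q c w = Q ∨ q c w = Q⁻¹ := by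
      intro w hw
      induction hw with
      | refl => intro h; exact absurd rfl h
      | tail _ hstep ih =>
        rename_i w w' _
        obtain ⟨hww', hrww'⟩ := hstep
        intro hw'c
        by_cases hwc : w = c
        · subst hwc
          exact claim1 w w' hww' hrww'
        · have h1 : q c w = Q ∨ q c w = Q⁻¹ := ih hwc
          have h2 : q c w * q c w' = 1 :=
            F w w' c hww' (fun h => hw'c h.symm) (fun h => hwc h.symm) hrww'
          have : q c w' = (q c w)⁻¹ := eq_inv_of_mul_eq_one_right h2
          rw [this]
          rcases h1 with h | h
          · right; rw [h]
          · left; rw [h, inv_inv]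
    exact main d (hconn c d) (fun h => hcd h.symm)
  refine ⟨Q, hQ0, ?_⟩
  ext c
  simp only [Set.mem_setOf_eq, Set.mem_insert_iff, Set.mem_singleton_iff]
  constructor
  · rintro ⟨i, j, hij, rfl⟩
    exact claim2 i j hij
  · rintro (rfl | rfl)
    · exact ⟨a, b, hab, rfl⟩
    · exact ⟨b, a, fun h => hab h.symm, hqinv a b hab⟩

end
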